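/- Let A ∈ ℝ^{m×n}, C ∈ ℝ^{p×n}. With A_{N(C)}† defined as the operator sending y ∈ ℝᵐ to the minimum 2-norm minimizer of ‖Ax − y‖₂ over x ∈ N(C), and C_A† the weighted pseudoinverse of C with respect to A, the identity (I − A_{N(C)}† A) C† = C_A† holds, where C† is the Moore–Penrose pseudoinverse of C. -/

import Mathlib

open Matrix

set_option maxHeartbeats 1000000

lemma aux_inner_zero {E : Type*} [NormedAddCommGroup E] [InnerProductSpace ℝ E]
    (u w : E) (h : ∀ t : ℝ, ‖u‖ ≤ ‖u + t • w‖) : (inner ℝ u w : ℝ) = 0 := by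
  by_cases hw : w = 0
  · simp [hw]
  · have hw2 : (0:ℝ) < ‖w‖ ^ 2 := pow_pos (norm_pos_iff.mpr hw) 2
    set t : ℝ := -(inner ℝ u w : ℝ) / ‖w‖ ^ 2 with ht
    have h1 := h t
    have h2 : ‖u + t • w‖ ^ 2 = ‖u‖ ^ 2 + 2 * (t * (inner ℝ u w : ℝ)) + t ^ 2 * ‖w‖ ^ 2 := by
      rw [norm_add_sq_real, real_inner_smul_right, norm_smul, Real.norm_eq_abs, mul_pow, sq_abs]
    have h3 : ‖u‖ ^ 2 ≤ ‖u + t • w‖ ^ 2 := by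
      have := norm_nonneg u
      nlinarith
    have h4 : t * ‖w‖ ^ 2 = -(inner ℝ u w : ℝ) := by
      rw [ht]; field_simp
    nlinarith [sq_nonneg (inner ℝ u w : ℝ)]

lemma aux_eq {E : Type*} [NormedAddCommGroup E] [InnerProductSpace ℝ E] (a b : E)
    (h1 : ‖a‖ = ‖b‖) (h2 : 2 * ‖b‖ ≤ ‖a + b‖) : a = b := by
  have hp := parallelogram_law_with_norm ℝ a b
  have hab : ‖a - b‖ = 0 := by
    nlinarith [norm_nonneg (a - b), norm_nonneg (a + b), norm_nonneg b]
  exact sub_eq_zero.mp (norm_eq_zero.mp hab)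

/-- `(I − A_{N(C)}† A) C† = C_A†`, where `C† d` is the minimum 2-norm minimizer of `‖Cx−d‖`,
`A_{N(C)}† y` is the minimum 2-norm minimizer of `‖Ax−y‖` over `N(C)`, and `C_A† d` is the
minimum 2-norm solution of the GLS problem `min ‖Ax‖ s.t. ‖Cx−d‖ minimal`. -/
theorem weighted_pinv_identity (m n p : ℕ) (A : Matrix (Fin m) (Fin n) ℝ)
    (C : Matrix (Fin p) (Fin n) ℝ)
    (Cdag : EuclideanSpace ℝ (Fin p) → EuclideanSpace ℝ (Fin n))
    (hCdag : ∀ d : EuclideanSpace ℝ (Fin p),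
      (∀ y, ‖Matrix.toEuclideanLin C (Cdag d) - d‖ ≤ ‖Matrix.toEuclideanLin C y - d‖) ∧
      (∀ y, (∀ z, ‖Matrix.toEuclideanLin C y - d‖ ≤ ‖Matrix.toEuclideanLin C z - d‖) →
        ‖Cdag d‖ ≤ ‖y‖))
    (ANdag : EuclideanSpace ℝ (Fin m) → EuclideanSpace ℝ (Fin n))
    (hANdag : ∀ y : EuclideanSpace ℝ (Fin m),
      ANdag y ∈ LinearMap.ker (Matrix.toEuclideanLin C) ∧
      (∀ v ∈ LinearMap.ker (Matrix.toEuclideanLin C),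
        ‖Matrix.toEuclideanLin A (ANdag y) - y‖ ≤ ‖Matrix.toEuclideanLin A v - y‖) ∧
      (∀ v ∈ LinearMap.ker (Matrix.toEuclideanLin C),
        (∀ w ∈ LinearMap.ker (Matrix.toEuclideanLin C),
          ‖Matrix.toEuclideanLin A v - y‖ ≤ ‖Matrix.toEuclideanLin A w - y‖) → ‖ANdag y‖ ≤ ‖v‖))
    (CAdag : EuclideanSpace ℝ (Fin p) → EuclideanSpace ℝ (Fin n))
    (hCAdag : ∀ d : EuclideanSpace ℝ (Fin p),
      (∀ y, ‖Matrix.toEuclideanLin C (CAdag d) - d‖ ≤ ‖Matrix.toEuclideanLin C y - d‖) ∧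
      (∀ y, (∀ z, ‖Matrix.toEuclideanLin C y - d‖ ≤ ‖Matrix.toEuclideanLin C z - d‖) →
        ‖Matrix.toEuclideanLin A (CAdag d)‖ ≤ ‖Matrix.toEuclideanLin A y‖) ∧
      (∀ y, ((∀ z, ‖Matrix.toEuclideanLin C y - d‖ ≤ ‖Matrix.toEuclideanLin C z - d‖) ∧
          (∀ z, (∀ w, ‖Matrix.toEuclideanLin C z - d‖ ≤ ‖Matrix.toEuclideanLin C w - d‖) →
            ‖Matrix.toEuclideanLin A y‖ ≤ ‖Matrix.toEuclideanLin A z‖)) → ‖CAdag d‖ ≤ ‖y‖)) :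
    ∀ d : EuclideanSpace ℝ (Fin p),
      Cdag d - ANdag (Matrix.toEuclideanLin A (Cdag d)) = CAdag d := by
  intro d
  set L := Matrix.toEuclideanLin C with hLdef
  set M := Matrix.toEuclideanLin A with hMdef
  obtain ⟨hC1, hC2⟩ := hCdag d
  set u := Cdag d with hu
  set v := ANdag (M u) with hv
  obtain ⟨hker, hAmin, hANmin⟩ := hANdag (M u)
  obtain ⟨hG1, hG2, hG3⟩ := hCAdag d
  set c := CAdag d with hc
  set x := u - v with hx
  -- orthogonality of u against ker L
  have F0 : ∀ w, L w = 0 → (inner ℝ u w : ℝ) = 0 := by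
    intro w hw
    apply aux_inner_zero
    intro t
    apply hC2
    intro z
    have he : L (u + t • w) = L u := by rw [map_add, L.map_smul, hw, smul_zero, add_zero]
    rw [he]
    exact hC1 z
  -- any minimizer of ‖C·−d‖ has the same image
  have F1 : ∀ y, (∀ z, ‖L y - d‖ ≤ ‖L z - d‖) → L y = L u := by
    intro y hy
    have e1 : ‖L y - d‖ = ‖L u - d‖ := le_antisymm (hy u) (hC1 y)
    have e2 : 2 * ‖L u - d‖ ≤ ‖(L y - d) + (L u - d)‖ := by
      have h3 : L ((1/2 : ℝ) • (y + u)) - d = (1/2 : ℝ) • ((L y - d) + (L u - d)) := by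
        rw [L.map_smul, map_add]; module
      have h4 := hC1 ((1/2 : ℝ) • (y + u))
      rw [h3, norm_smul, Real.norm_eq_abs] at h4
      have : |(1/2 : ℝ)| = 1/2 := by norm_num
      rw [this] at h4
      linarith
    have := aux_eq (L y - d) (L u - d) e1 e2
    have := sub_left_injective this
    exact this
  have hvker : L v = 0 := LinearMap.mem_ker.mp hker
  have hLxLu : L x = L u := by rw [hx, map_sub, hvker, sub_zero]
  -- x is a minimizer of ‖C·−d‖
  have hx1 : ∀ z, ‖L x - d‖ ≤ ‖L z - d‖ := by
    intro z; rw [hLxLu]; exact hC1 z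
  -- x minimizes ‖A·‖ among minimizers
  have hx2 : ∀ z, (∀ w, ‖L z - d‖ ≤ ‖L w - d‖) → ‖M x‖ ≤ ‖M z‖ := by
    intro z hz
    have hLz := F1 z hz
    have hwker : u - z ∈ LinearMap.ker L := by
      rw [LinearMap.mem_ker, map_sub, hLz, sub_self]
    have h := hAmin (u - z) hwker
    have e1 : M v - M u = -(M x) := by rw [hx, map_sub]; abel
    have e2 : M (u - z) - M u = -(M z) := by rw [map_sub]; abel
    rw [e1, e2, norm_neg, norm_neg] at h
    exact h
  -- x has minimal norm among GLS solutions
  have hx3 : ∀ y, ((∀ z, ‖L y - d‖ ≤ ‖L z - d‖) ∧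
      (∀ z, (∀ w, ‖L z - d‖ ≤ ‖L w - d‖) → ‖M y‖ ≤ ‖M z‖)) → ‖x‖ ≤ ‖y‖ := by
    rintro y ⟨hy1, hy2⟩
    have hLy := F1 y hy1
    set w := u - y with hwdef
    have hwker : L w = 0 := by rw [hwdef, map_sub, hLy, sub_self]
    have hwmin : ∀ w' ∈ LinearMap.ker L, ‖M w - M u‖ ≤ ‖M w' - M u‖ := by
      intro w' hw'
      have hz : ∀ zz, ‖L (u - w') - d‖ ≤ ‖L zz - d‖ := by
        intro zz
        have he : L (u - w') = L u := by
          rw [map_sub, LinearMap.mem_ker.mp hw', sub_zero]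
        rw [he]; exact hC1 zz
      have h5 := hy2 (u - w') hz
      have e1 : M w - M u = -(M y) := by rw [hwdef, map_sub]; abel
      have e2 : M w' - M u = -(M (u - w')) := by rw [map_sub]; abel
      rw [e1, e2, norm_neg, norm_neg]
      exact h5
    have hvw : ‖v‖ ≤ ‖w‖ := hANmin w (LinearMap.mem_ker.mpr hwker) hwmin
    have huv : (inner ℝ u v : ℝ) = 0 := F0 v hvker
    have huw : (inner ℝ u w : ℝ) = 0 := F0 w hwker
    have nx : ‖x‖ ^ 2 = ‖u‖ ^ 2 + ‖v‖ ^ 2 := by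
      rw [hx, norm_sub_sq_real, huv]; ring
    have ny : ‖y‖ ^ 2 = ‖u‖ ^ 2 + ‖w‖ ^ 2 := by
      have he : y = u - w := by rw [hwdef]; abel
      rw [he, norm_sub_sq_real, huw]; ring
    have hsq : ‖x‖ ^ 2 ≤ ‖y‖ ^ 2 := by
      have := pow_le_pow_left₀ (norm_nonneg v) hvw 2
      rw [nx, ny]; linarith
    exact le_of_pow_le_pow_left₀ two_ne_zero (norm_nonneg y) hsq
  -- the two candidates have equal norms
  have hcx : ‖c‖ ≤ ‖x‖ := hG3 x ⟨hx1, hx2⟩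
  have hxc : ‖x‖ ≤ ‖c‖ := hx3 c ⟨hG1, hG2⟩
  have hMxc : ‖M x‖ = ‖M c‖ := le_antisymm (hx2 c hG1) (hG2 x hx1)
  have hLc := F1 c hG1
  -- the midpoint argument
  have hmid1 : ∀ z, ‖L ((1/2 : ℝ) • (x + c)) - d‖ ≤ ‖L z - d‖ := by
    intro z
    have he : L ((1/2 : ℝ) • (x + c)) = L u := by
      rw [L.map_smul, map_add, hLxLu, hLc]; module
    rw [he]; exact hC1 z
  have hmid2 : ∀ z, (∀ ww, ‖L z - d‖ ≤ ‖L ww - d‖) →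
      ‖M ((1/2 : ℝ) • (x + c))‖ ≤ ‖M z‖ := by
    intro z hz
    have h1 : ‖M ((1/2 : ℝ) • (x + c))‖ ≤ ‖M x‖ := by
      rw [M.map_smul, map_add, norm_smul, Real.norm_eq_abs]
      have hn : |(1/2 : ℝ)| = 1/2 := by norm_num
      rw [hn]
      have := norm_add_le (M x) (M c)
      linarith
    exact h1.trans (hx2 z hz)
  have hfin := hG3 ((1/2 : ℝ) • (x + c)) ⟨hmid1, hmid2⟩
  rw [norm_smul, Real.norm_eq_abs] at hfin
  have hn : |(1/2 : ℝ)| = 1/2 := by norm_num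
  rw [hn] at hfin
  have hnorm : ‖x‖ = ‖c‖ := le_antisymm hxc hcx
  exact aux_eq x c hnorm (by linarith)
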